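/- Let K be a finite abelian group generated by n elements, and let a, b₁, …, bₙ ∈ K. Then there exist integers m₁, …, mₙ such that the subgroup generated by a, b₁, …, bₙ equals the subgroup generated by a^{m₁}·b₁, …, a^{mₙ}·bₙ. -/

import Mathlib

open Subgroup Set Finset

universe u

lemma zpowers_cyclic {G : Type*} [Group G] (g : G) : IsCyclic (Subgroup.zpowers g) := by
  refine ⟨⟨g, Subgroup.mem_zpowers g⟩, fun x => ?_⟩
  obtain ⟨k, hk⟩ := x.2
  exact ⟨k, Subtype.ext (by simpa using hk)⟩

lemma subgroup_gen (n : ℕ) : ∀ (K : Type u) [CommGroup K] (s : Fin n → K),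
    Subgroup.closure (Set.range s) = ⊤ → ∀ H : Subgroup K,
    ∃ x : Fin n → K, Subgroup.closure (Set.range x) = H := by
  induction n with
  | zero =>
    intro K _ s hs H
    refine ⟨Fin.elim0, ?_⟩
    rw [Set.range_eq_empty, Subgroup.closure_empty] at hs ⊢
    exact le_antisymm bot_le (le_trans le_top hs.ge)
  | succ n ih =>
    intro K _ s hs H
    set N := Subgroup.zpowers (s 0) with hN
    haveI : N.Normal := ⟨fun g hg h => by simpa [mul_comm] using hg⟩
    set π := QuotientGroup.mk' N with hπ
    -- images of the tail generate the quotient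
    have hker : π.ker = N := QuotientGroup.ker_mk' N
    have hsurj : Function.Surjective π := QuotientGroup.mk'_surjective N
    have hgenQ : Subgroup.closure (Set.range (fun i : Fin n => π (s i.succ))) = ⊤ := by
      rw [eq_top_iff, ← Subgroup.map_top_of_surjective π hsurj, ← hs,
        MonoidHom.map_closure, ← Set.range_comp]
      refine Subgroup.closure_le _ |>.mpr ?_
      rintro _ ⟨i, rfl⟩
      induction i using Fin.cases with
      | zero =>
        have : π (s 0) = 1 := by
          rw [← MonoidHom.mem_ker, hker]
          exact Subgroup.mem_zpowers _
        simp only [Function.comp_apply, this]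
        exact Subgroup.one_mem _
      | succ j =>
        exact Subgroup.subset_closure ⟨j, rfl⟩
    obtain ⟨x', hx'⟩ := ih (K ⧸ N) (fun i => π (s i.succ)) hgenQ (H.map π)
    -- lift x' into H
    have hlift : ∀ i, ∃ y : K, y ∈ H ∧ π y = x' i := by
      intro i
      have : x' i ∈ H.map π := by
        rw [← hx']
        exact Subgroup.subset_closure ⟨i, rfl⟩
      obtain ⟨y, hy, hyx⟩ := this
      exact ⟨y, hy, hyx⟩
    choose y hyH hyπ using hlift
    -- H ⊓ N is cyclic
    haveI : IsCyclic N := zpowers_cyclic (s 0)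
    haveI : IsCyclic ((H ⊓ N : Subgroup K)) := Subgroup.isCyclic_of_le inf_le_right
    obtain ⟨c, hc⟩ := IsCyclic.exists_generator (α := (H ⊓ N : Subgroup K))
    refine ⟨Fin.cons (c : K) y, ?_⟩
    have hcH : (c : K) ∈ H := c.2.1
    apply le_antisymm
    · refine Subgroup.closure_le _ |>.mpr ?_
      rintro _ ⟨i, rfl⟩
      induction i using Fin.cases with
      | zero => simpa using hcH
      | succ j => simpa using hyH j
    · intro h hh
      have hπh : π h ∈ Subgroup.map π (Subgroup.closure (Set.range y)) := by
        have : π h ∈ H.map π := ⟨h, hh, rfl⟩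
        rw [← hx'] at this
        rw [MonoidHom.map_closure, ← Set.range_comp]
        rw [show (⇑π ∘ y) = x' from funext hyπ]
        exact this
      obtain ⟨u, hu0, huh⟩ := hπh
      have hu : u ∈ Subgroup.closure (Set.range y) := hu0
      have huH : u ∈ H := by
        refine Subgroup.closure_le H |>.mpr ?_ hu
        rintro _ ⟨i, rfl⟩; exact hyH i
      have hdiff : h * u⁻¹ ∈ H ⊓ N := by
        rw [Subgroup.mem_inf]
        refine ⟨H.mul_mem hh (H.inv_mem huH), ?_⟩
        rw [← hker, MonoidHom.mem_ker, map_mul, map_inv, huh, mul_inv_cancel]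
      obtain ⟨k, hk⟩ := hc ⟨h * u⁻¹, hdiff⟩
      have hkk : (c : K) ^ k = h * u⁻¹ := by
        have := congrArg (Subtype.val) hk
        simpa using this
      have hcmem : (c : K) ∈ Subgroup.closure (Set.range (Fin.cons (c : K) y)) := by
        exact Subgroup.subset_closure ⟨0, rfl⟩
      have humem : u ∈ Subgroup.closure (Set.range (Fin.cons (c : K) y)) := by
        refine Subgroup.closure_mono ?_ hu
        rintro _ ⟨i, rfl⟩
        exact ⟨i.succ, by simp⟩
      have : h = (c : K) ^ k * u := by rw [hkk]; group
      rw [this]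
      exact Subgroup.mul_mem _ (Subgroup.zpow_mem _ hcmem k) humem

-- counting core: in a finite comm group, one can multiply a generating-mod-N tuple by
-- elements of N = zpowers a to get a tuple generating H, provided H has an n-element
-- generating tuple.
lemma gaschutz_core {K : Type*} [CommGroup K] [Finite K] {n : ℕ} (a : K) (H : Subgroup K)
    (b x₀ : Fin n → K)
    (hb : Subgroup.zpowers a ⊔ Subgroup.closure (Set.range b) = H)
    (hx₀ : Subgroup.closure (Set.range x₀) = H) :
    ∃ ν : Fin n → Subgroup.zpowers a,
      Subgroup.closure (Set.range fun i => b i * (ν i : K)) = H := by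
  classical
  letI : Fintype K := Fintype.ofFinite K
  haveI : Finite (Subgroup K) :=
    Finite.of_injective (fun U : Subgroup K => (U : Set K)) SetLike.coe_injective
  letI : Fintype (Subgroup K) := Fintype.ofFinite _
  set N := Subgroup.zpowers a with hNdef
  have haH : a ∈ H := by
    rw [← hb]; exact Subgroup.mem_sup_left (Subgroup.mem_zpowers a)
  -- the counting function
  set c : (Fin n → K) → Subgroup K → ℕ := fun x U =>
    (Finset.univ.filter fun ν : Fin n → N =>
      Subgroup.closure (Set.range fun i => x i * (ν i : K)) = U).card with hc
  -- Claim 0 : stability of generating mod N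
  have claim0 : ∀ x : Fin n → K, N ⊔ Subgroup.closure (Set.range x) = H →
      ∀ ν : Fin n → N, N ⊔ Subgroup.closure (Set.range fun i => x i * (ν i : K)) = H := by
    intro x hx ν
    apply le_antisymm
    · rw [← hx]
      refine sup_le (le_sup_left) ?_
      refine (Subgroup.closure_le _).mpr ?_
      rintro _ ⟨i, rfl⟩
      have h1 : x i * (ν i : K) ∈ N ⊔ Subgroup.closure (Set.range x) := by
        refine Subgroup.mul_mem _ ?_ ?_
        · exact Subgroup.mem_sup_right (Subgroup.subset_closure ⟨i, rfl⟩)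
        · exact Subgroup.mem_sup_left (ν i).2
      exact h1
    · rw [← hx]
      refine sup_le (le_sup_left) ?_
      refine (Subgroup.closure_le _).mpr ?_
      rintro _ ⟨i, rfl⟩
      have : x i = (x i * (ν i : K)) * ((ν i : K))⁻¹ := by group
      rw [this]
      refine Subgroup.mul_mem _ ?_ ?_
      · exact Subgroup.mem_sup_right (Subgroup.subset_closure ⟨i, rfl⟩)
      · exact Subgroup.mem_sup_left (Subgroup.inv_mem _ (ν i).2)
  -- Claim 1 : count of lifts landing in U
  have claim1 : ∀ (x : Fin n → K) (U : Subgroup K), (∀ i, x i ∈ N ⊔ U) →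
      (Finset.univ.filter fun ν : Fin n → N => ∀ i, x i * (ν i : K) ∈ U).card
        = Fintype.card (N ⊓ U : Subgroup K) ^ n := by
    intro x U hx
    rw [← Fintype.card_subtype]
    have e1 : {ν : Fin n → N // ∀ i, x i * (ν i : K) ∈ U}
        ≃ ∀ i : Fin n, {z : N // x i * (z : K) ∈ U} :=
      Equiv.subtypePiEquivPi (p := fun (i : Fin n) (z : N) => x i * (z : K) ∈ U)
    rw [Fintype.card_congr e1, Fintype.card_pi]
    have e2 : ∀ i : Fin n, Fintype.card {z : N // x i * (z : K) ∈ U}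
        = Fintype.card (N ⊓ U : Subgroup K) := by
      intro i
      obtain ⟨n₀, hn₀, u₀, hu₀, hmul⟩ := Subgroup.mem_sup.mp (hx i)
      refine Fintype.card_congr ?_
      refine
        { toFun := fun z => ⟨n₀ * (z.1 : K), Subgroup.mem_inf.mpr ⟨Subgroup.mul_mem _ hn₀ z.1.2, ?_⟩⟩
          invFun := fun w => ⟨⟨n₀⁻¹ * (w : K), Subgroup.mul_mem _ (Subgroup.inv_mem _ hn₀)
            (Subgroup.mem_inf.mp w.2).1⟩, ?_⟩
          left_inv := ?_
          right_inv := ?_ }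
      · have hn₀eq : n₀ = x i * u₀⁻¹ := by rw [← hmul, mul_inv_cancel_right]
        have : n₀ * (z.1 : K) = (x i * (z.1 : K)) * u₀⁻¹ := by
          rw [hn₀eq]; exact mul_right_comm _ _ _
        rw [this]
        exact Subgroup.mul_mem _ z.2 (Subgroup.inv_mem _ hu₀)
      · have hu₀eq : x i * n₀⁻¹ = u₀ := by
          rw [← hmul, mul_comm n₀ u₀, mul_inv_cancel_right]
        show x i * (n₀⁻¹ * (w : K)) ∈ U
        have : x i * (n₀⁻¹ * (w : K)) = u₀ * (w : K) := by
          rw [← hu₀eq, mul_assoc]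
        rw [this]
        exact Subgroup.mul_mem _ hu₀ (Subgroup.mem_inf.mp w.2).2
      · rintro ⟨⟨z, hz⟩, hz2⟩
        ext
        show n₀⁻¹ * (n₀ * z) = z
        group
      · rintro ⟨w, hw⟩
        ext
        show n₀ * (n₀⁻¹ * w) = w
        group
    rw [Finset.prod_congr rfl (fun i _ => e2 i), Finset.prod_const, Finset.card_univ,
      Fintype.card_fin]
  -- Claim 2 : sum decomposition
  have claim2 : ∀ (x : Fin n → K) (U : Subgroup K), (∀ i, x i ∈ N ⊔ U) →
      ∑ V ∈ Finset.univ.filter (· ≤ U), c x V = Fintype.card (N ⊓ U : Subgroup K) ^ n := by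
    intro x U hx
    rw [← claim1 x U hx]
    rw [Finset.card_eq_sum_card_fiberwise
      (f := fun ν : Fin n → N => Subgroup.closure (Set.range fun i => x i * (ν i : K)))
      (t := Finset.univ.filter (· ≤ U))]
    · refine Finset.sum_congr rfl ?_
      intro V hV
      simp only [Finset.mem_filter, Finset.mem_univ, true_and] at hV
      have hfe : ((Finset.univ.filter fun ν : Fin n → N => ∀ i, x i * (ν i : K) ∈ U).filter
          fun ν => Subgroup.closure (Set.range fun i => x i * (ν i : K)) = V)
          = Finset.univ.filter
            (fun ν : Fin n → N => Subgroup.closure (Set.range fun i => x i * (ν i : K)) = V) := by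
        ext ν
        simp only [Finset.mem_filter, Finset.mem_univ, true_and]
        constructor
        · rintro ⟨_, h⟩; exact h
        · rintro h
          refine ⟨fun i => ?_, h⟩
          exact hV (h ▸ Subgroup.subset_closure ⟨i, rfl⟩)
      exact congrArg Finset.card hfe.symm
    · intro ν hν
      simp only [Finset.mem_coe, Finset.mem_filter, Finset.mem_univ, true_and] at hν ⊢
      refine (Subgroup.closure_le U).mpr ?_
      rintro _ ⟨i, rfl⟩
      exact hν i
  -- Claim 3 : vanishing
  have claim3 : ∀ x : Fin n → K, N ⊔ Subgroup.closure (Set.range x) = H →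
      ∀ V : Subgroup K, ¬(N ⊔ V = H) → c x V = 0 := by
    intro x hx V hV
    rw [hc]
    simp only [Finset.card_eq_zero, Finset.filter_eq_empty_iff]
    intro ν _
    intro heq
    exact hV (heq ▸ claim0 x hx ν)
  -- Main induction
  have main : ∀ k : ℕ, ∀ U : Subgroup K, Nat.card U ≤ k → N ⊔ U = H →
      ∀ x x' : Fin n → K, N ⊔ Subgroup.closure (Set.range x) = H →
        N ⊔ Subgroup.closure (Set.range x') = H → c x U = c x' U := by
    intro k
    induction k with
    | zero =>
      intro U hU
      exact absurd (lt_of_lt_of_le Nat.card_pos hU) (by simp)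
    | succ k ih =>
      intro U hUk hU x x' hx hx'
      have hxU : ∀ i, x i ∈ N ⊔ U := by
        intro i
        rw [hU, ← hx]
        exact Subgroup.mem_sup_right (Subgroup.subset_closure ⟨i, rfl⟩)
      have hxU' : ∀ i, x' i ∈ N ⊔ U := by
        intro i
        rw [hU, ← hx']
        exact Subgroup.mem_sup_right (Subgroup.subset_closure ⟨i, rfl⟩)
      have hsum := (claim2 x U hxU).trans (claim2 x' U hxU').symm
      have hUmem : U ∈ Finset.univ.filter (· ≤ U) := by simp
      rw [← Finset.add_sum_erase _ _ hUmem, ← Finset.add_sum_erase _ _ hUmem] at hsum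
      have herase : ∑ V ∈ (Finset.univ.filter (· ≤ U)).erase U, c x V
          = ∑ V ∈ (Finset.univ.filter (· ≤ U)).erase U, c x' V := by
        refine Finset.sum_congr rfl ?_
        intro V hVmem
        have hVne : V ≠ U := (Finset.mem_erase.mp hVmem).1
        have hVle : V ≤ U := by
          have := (Finset.mem_erase.mp hVmem).2
          simpa using this
        by_cases hNV : N ⊔ V = H
        · refine ih V ?_ hNV x x' hx hx'
          have hlt : Nat.card V < Nat.card U := by
            rw [← SetLike.coe_sort_coe V, ← SetLike.coe_sort_coe U,
              Nat.card_coe_set_eq, Nat.card_coe_set_eq]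
            refine Set.ncard_lt_ncard ?_ (Set.toFinite _)
            exact SetLike.coe_ssubset_coe.mpr (lt_of_le_of_ne hVle hVne)
          omega
        · rw [claim3 x hx V hNV, claim3 x' hx' V hNV]
      rw [herase] at hsum
      exact Nat.add_right_cancel hsum
  -- conclude
  have hx₀' : N ⊔ Subgroup.closure (Set.range x₀) = H := by
    rw [hx₀]
    exact sup_eq_right.mpr (Subgroup.zpowers_le.mpr haH)
  have hpos : 0 < c x₀ H := by
    rw [hc]
    refine Finset.card_pos.mpr ⟨fun _ => 1, ?_⟩
    simp only [Finset.mem_filter, Finset.mem_univ, true_and]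
    simpa using hx₀
  have hNH : N ⊔ H = H := sup_eq_right.mpr (Subgroup.zpowers_le.mpr haH)
  have heq : c b H = c x₀ H := main (Nat.card H) H le_rfl hNH b x₀ hb hx₀'
  have hposb : 0 < c b H := heq ▸ hpos
  obtain ⟨ν, hν⟩ := Finset.card_pos.mp hposb
  simp only [Finset.mem_filter, Finset.mem_univ, true_and] at hν
  exact ⟨ν, hν⟩

theorem stmt_0 (K : Type*) [CommGroup K] [Finite K] (n : ℕ)
    (hgen : ∃ s : Fin n → K, Subgroup.closure (Set.range s) = ⊤)
    (a : K) (b : Fin n → K) :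
    ∃ m : Fin n → ℤ,
      Subgroup.closure ({a} ∪ Set.range b) =
        Subgroup.closure (Set.range fun i => a ^ (m i) * b i) := by
  obtain ⟨s, hs⟩ := hgen
  set H := Subgroup.closure ({a} ∪ Set.range b) with hH
  have hb : Subgroup.zpowers a ⊔ Subgroup.closure (Set.range b) = H := by
    rw [hH, Subgroup.closure_union, Subgroup.zpowers_eq_closure]
  obtain ⟨x₀, hx₀⟩ := subgroup_gen n K s hs H
  obtain ⟨ν, hν⟩ := gaschutz_core a H b x₀ hb hx₀
  choose m hm using fun i => Subgroup.mem_zpowers_iff.mp (ν i).2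
  refine ⟨m, ?_⟩
  have hfun : (fun i => a ^ m i * b i) = fun i => b i * ((ν i : K)) := by
    funext i
    rw [hm i, mul_comm]
  rw [hfun, hν]
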